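/- The following identity of formal power series in q holds: ∑_{n ≥ 0} b₂(n)·qⁿ = (q²/(1−q)) · ∏_{k=2}^{∞}(1 + q^k). -/

import Mathlib

/-!
Statement 13:
`∑_{n ≥ 0} b₂(n) qⁿ = (q²/(1−q)) ∏_{k=2}^{∞}(1 + q^k)`
as formal power series in `q` over `ℚ`, where `b₂(n)` is the total number of cells of
hook length 2 summed over all partitions of `n` into distinct parts.  The infinite product
`∏_{k=a}^{∞}(1+q^k)` is encoded coefficientwise via its (stable) partial products.
-/

/-- `λ'_j`: the number of parts of `π` that are at least `j` (the conjugate partition). -/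
def conjPart (π : Multiset ℕ) (j : ℕ) : ℕ := (π.filter (fun p => j ≤ p)).card

/-- `λ_i`: the `i`-th largest part of `π` (1-indexed). -/
def rowPart (π : Multiset ℕ) (i : ℕ) : ℕ :=
  ((Finset.Icc 1 π.sum).filter (fun j => i ≤ conjPart π j)).card

-- basic lemmas
lemma conjPart_anti (m : Multiset ℕ) {j₁ j₂ : ℕ} (h : j₁ ≤ j₂) : conjPart m j₂ ≤ conjPart m j₁ :=
  Multiset.card_le_card (Multiset.monotone_filter_right m (fun _ hx => le_trans h hx))

lemma conjPart_le_card (m : Multiset ℕ) (j : ℕ) : conjPart m j ≤ Multiset.card m :=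
  Multiset.card_le_card (Multiset.filter_le _ m)

lemma card_le_sum_of_pos (m : Multiset ℕ) (hpos : ∀ x ∈ m, 0 < x) : Multiset.card m ≤ m.sum := by
  have := Multiset.card_nsmul_le_sum (s := m) (a := 1) (fun x hx => hpos x hx)
  simpa using this

lemma mul_conjPart_le_sum (m : Multiset ℕ) (j : ℕ) : conjPart m j * j ≤ m.sum := by
  have h1 : conjPart m j * j = (Multiset.card (m.filter (fun p => j ≤ p))) • j := by
    simp [conjPart, smul_eq_mul]
  have h2 := Multiset.card_nsmul_le_sum (s := m.filter (fun p => j ≤ p)) (a := j)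
    (fun x hx => (Multiset.mem_filter.mp hx).2)
  have h3 : (m.filter (fun p => j ≤ p)).sum ≤ m.sum := by
    obtain ⟨u, hu⟩ := Multiset.le_iff_exists_add.mp (Multiset.filter_le (fun p => j ≤ p) m)
    conv_rhs => rw [hu]
    rw [Multiset.sum_add]; exact Nat.le_add_right _ _
  calc conjPart m j * j = _ := h1
    _ ≤ _ := h2
    _ ≤ m.sum := h3

lemma rowPart_le_sum (m : Multiset ℕ) (i : ℕ) : rowPart m i ≤ m.sum := by
  have : rowPart m i ≤ (Finset.Icc 1 m.sum).card := Finset.card_le_card (Finset.filter_subset _ _)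
  simpa [Nat.card_Icc] using this

lemma conjPart_succ_count (m : Multiset ℕ) (j : ℕ) :
    conjPart m j = conjPart m (j+1) + m.count j := by
  classical
  rw [Multiset.count_eq_card_filter_eq]
  unfold conjPart
  rw [← Multiset.card_add, Multiset.filter_add_filter]
  have h1 : Multiset.filter (fun a => (j+1 ≤ a) ∨ (j = a)) m = Multiset.filter (fun p => j ≤ p) m := by
    apply Multiset.filter_congr; intro x _; constructor <;> intro h <;> omega
  have h2 : Multiset.filter (fun a => (j+1 ≤ a) ∧ (j = a)) m = 0 := by
    rw [Multiset.filter_eq_nil]; intro a _; omega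
  rw [h1, h2]; simp

lemma le_rowPart_iff (m : Multiset ℕ) {i j : ℕ} (hj : 1 ≤ j) :
    j ≤ rowPart m i ↔ j ≤ m.sum ∧ i ≤ conjPart m j := by
  constructor
  · intro h
    by_contra hc
    have hS : ((Finset.Icc 1 m.sum).filter (fun j' => i ≤ conjPart m j')) ⊆ Finset.Icc 1 (j-1) := by
      intro x hx
      simp only [Finset.mem_filter, Finset.mem_Icc] at hx ⊢
      refine ⟨hx.1.1, ?_⟩
      by_contra hxj
      have hjx : j ≤ x := by omega
      exact hc ⟨le_trans hjx hx.1.2, le_trans hx.2 (conjPart_anti m hjx)⟩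
    have := Finset.card_le_card hS
    rw [Nat.card_Icc] at this
    unfold rowPart at h
    omega
  · rintro ⟨h1, h2⟩
    have hS : Finset.Icc 1 j ⊆ ((Finset.Icc 1 m.sum).filter (fun j' => i ≤ conjPart m j')) := by
      intro x hx
      simp only [Finset.mem_Icc] at hx
      simp only [Finset.mem_filter, Finset.mem_Icc]
      exact ⟨⟨hx.1, le_trans hx.2 h1⟩, le_trans h2 (conjPart_anti m hx.2)⟩
    have := Finset.card_le_card hS
    rw [Nat.card_Icc] at this
    unfold rowPart
    omega

/-- The number of cells of hook length `t` in the Young diagram of `π`: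
cells `(i,j)` with `1 ≤ i`, `1 ≤ j ≤ λ_i` and `λ_i + λ'_j − i − j + 1 = t`. -/
def hookCount (π : Multiset ℕ) (t : ℕ) : ℕ :=
  (((Finset.Icc 1 π.sum) ×ˢ (Finset.Icc 1 π.sum)).filter
    (fun c => c.2 ≤ rowPart π c.1 ∧ rowPart π c.1 + conjPart π c.2 + 1 = t + c.1 + c.2)).card

set_option linter.unreachableTactic false
set_option linter.unusedTactic false

lemma cell_iff (m : Multiset ℕ) (hpos : ∀ x ∈ m, 0 < x) (hnd : m.Nodup) (i j : ℕ) :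
    ((i,j) ∈ ((Finset.Icc 1 m.sum) ×ˢ (Finset.Icc 1 m.sum)).filter
      (fun c => c.2 ≤ rowPart m c.1 ∧ rowPart m c.1 + conjPart m c.2 + 1 = 2 + c.1 + c.2))
    ↔ (1 ≤ j ∧ j ∉ m ∧ (j+1) ∈ m ∧ i = conjPart m j) := by
  classical
  have hcount : ∀ x, m.count x ≤ 1 := Multiset.nodup_iff_count_le_one.mp hnd
  constructor
  · intro hc
    simp only [Finset.mem_filter, Finset.mem_product, Finset.mem_Icc] at hc
    obtain ⟨⟨⟨hi1, his⟩, hj1, hjs⟩, hle, heq⟩ := hc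
    obtain ⟨_, hiC⟩ := (le_rowPart_iff m hj1).mp hle
    -- two cases
    have hsplit : (rowPart m i = j ∧ conjPart m j = i + 1) ∨
        (rowPart m i = j + 1 ∧ conjPart m j = i) := by omega
    rcases hsplit with ⟨hR, hC⟩ | ⟨hR, hC⟩
    · exfalso
      by_cases hcase : j + 1 ≤ m.sum ∧ i ≤ conjPart m (j+1)
      · have := (le_rowPart_iff m (by omega : 1 ≤ j+1)).mpr hcase
        omega
      · rcases not_and_or.mp hcase with hns | hnC
        · -- j = m.sum, conjPart m j ≥ 2
          have hj : j = m.sum := by omega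
          have := mul_conjPart_le_sum m j
          rw [hC] at this
          nlinarith [hi1, hj1]
        · push_neg at hnC
          have := conjPart_succ_count m j
          have := hcount j
          omega
    · have hC1 : conjPart m (j+1) = i := by
        obtain ⟨_, h2⟩ := (le_rowPart_iff m (by omega : 1 ≤ j+1)).mp (by omega : j+1 ≤ rowPart m i)
        have := conjPart_anti m (by omega : j ≤ j+1)
        omega
      have hnotj : j ∉ m := by
        rw [← Multiset.count_pos]
        have := conjPart_succ_count m j
        omega
      have hmemj1 : (j+1) ∈ m := by
        rw [← Multiset.count_pos]
        have hsc := conjPart_succ_count m (j+1)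
        simp only [show j+1+1=j+2 by omega] at hsc
        have hC2 : conjPart m (j+2) < i := by
          by_cases hcase : j + 2 ≤ m.sum ∧ i ≤ conjPart m (j+2)
          · have := (le_rowPart_iff m (by omega : 1 ≤ j+2)).mpr hcase
            omega
          · rcases not_and_or.mp hcase with hns | hnC
            · have : conjPart m (j+2) = 0 := by
                unfold conjPart
                rw [Multiset.card_eq_zero, Multiset.filter_eq_nil]
                intro a ha
                have := Multiset.le_sum_of_mem ha
                omega
              omega
            · push_neg at hnC
              omega
        omega
      exact ⟨hj1, hnotj, hmemj1, by omega⟩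
  · rintro ⟨hj1, hjm, hj1m, hi⟩
    have hc0 : m.count j = 0 := Multiset.count_eq_zero.mpr hjm
    have hc1 : m.count (j+1) = 1 := le_antisymm (hcount _) (Multiset.one_le_count_iff_mem.mpr hj1m)
    have hsj := conjPart_succ_count m j
    have hsj1 := conjPart_succ_count m (j+1)
    simp only [show j+1+1=j+2 by omega] at hsj1
    have hj1s : j + 1 ≤ m.sum := Multiset.le_sum_of_mem hj1m
    have hipos : 1 ≤ i := by omega
    have hile : i ≤ m.sum := by
      have := conjPart_le_card m j
      have := card_le_sum_of_pos m hpos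
      omega
    have hRge : j + 1 ≤ rowPart m i :=
      (le_rowPart_iff m (by omega : 1 ≤ j+1)).mpr ⟨hj1s, by omega⟩
    have hRlt : ¬ (j + 2 ≤ rowPart m i) := by
      intro hcon
      obtain ⟨_, h2⟩ := (le_rowPart_iff m (by omega : 1 ≤ j+2)).mp hcon
      omega
    simp only [Finset.mem_filter, Finset.mem_product, Finset.mem_Icc]
    refine ⟨⟨⟨hipos, hile⟩, hj1, by omega⟩, by omega, by omega⟩

lemma hookCount_two_of_nodup (m : Multiset ℕ) (hpos : ∀ x ∈ m, 0 < x) (hnd : m.Nodup) :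
    hookCount m 2 = (m.toFinset.filter (fun p => 2 ≤ p ∧ (p-1) ∉ m)).card := by
  classical
  unfold hookCount
  apply Finset.card_bij (fun c _ => c.2 + 1)
  · intro c hc
    obtain ⟨hj1, hjm, hj1m, _⟩ := (cell_iff m hpos hnd c.1 c.2).mp hc
    simp only [Finset.mem_filter, Multiset.mem_toFinset]
    exact ⟨hj1m, by omega, by simpa using hjm⟩
  · intro c₁ h₁ c₂ h₂ heq
    obtain ⟨_, _, _, hi₁⟩ := (cell_iff m hpos hnd c₁.1 c₁.2).mp h₁
    obtain ⟨_, _, _, hi₂⟩ := (cell_iff m hpos hnd c₂.1 c₂.2).mp h₂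
    have hj : c₁.2 = c₂.2 := by omega
    have : c₁.1 = c₂.1 := by rw [hi₁, hi₂, hj]
    exact Prod.ext this hj
  · intro p hp
    simp only [Finset.mem_filter, Multiset.mem_toFinset] at hp
    obtain ⟨hpm, hp2, hpnot⟩ := hp
    refine ⟨(conjPart m (p-1), p-1), ?_, by omega⟩
    apply (cell_iff m hpos hnd _ _).mpr
    refine ⟨by omega, by simpa using hpnot, ?_, rfl⟩
    have : p - 1 + 1 = p := by omega
    rwa [this]

-- ## Phase 3: the bijection
def Bof (A : Finset ℕ) (p : ℕ) : Finset ℕ :=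
  ((A.filter (fun a => a + 2 ≤ p)).image (· + 1)) ∪ A.filter (fun a => p + 1 ≤ a)

lemma mem_Bof {A : Finset ℕ} {p b : ℕ} :
    b ∈ Bof A p ↔ (∃ a ∈ A, a + 2 ≤ p ∧ b = a + 1) ∨ (b ∈ A ∧ p + 1 ≤ b) := by
  simp only [Bof, Finset.mem_union, Finset.mem_image, Finset.mem_filter]
  constructor
  · rintro (⟨a, ⟨ha, h2⟩, rfl⟩ | ⟨h1, h2⟩)
    · exact Or.inl ⟨a, ha, h2, rfl⟩
    · exact Or.inr ⟨h1, h2⟩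
  · rintro (⟨a, ha, h2, rfl⟩ | ⟨h1, h2⟩)
    · exact Or.inl ⟨a, ⟨ha, h2⟩, rfl⟩
    · exact Or.inr ⟨h1, h2⟩

section BofFacts

variable {A : Finset ℕ} {p : ℕ} (hApos : ∀ a ∈ A, 0 < a) (hp2 : 2 ≤ p) (hpA : p ∈ A)
  (hp1 : p - 1 ∉ A)

include hp2 hp1 hpA in
lemma A_split : A.filter (fun a => ¬ (a + 2 ≤ p)) = insert p (A.filter (fun a => p + 1 ≤ a)) := by
  ext a
  simp only [Finset.mem_filter, Finset.mem_insert]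
  constructor
  · rintro ⟨ha, h2⟩
    by_cases hap : a = p
    · exact Or.inl hap
    · right
      refine ⟨ha, ?_⟩
      by_contra hc
      have : a = p - 1 := by omega
      exact hp1 (this ▸ ha)
  · rintro (rfl | ⟨ha, h2⟩)
    · exact ⟨hpA, by omega⟩
    · exact ⟨ha, by omega⟩

include hApos hp2 in
lemma lo_card_le : (A.filter (fun a => a + 2 ≤ p)).card + 2 ≤ p := by
  have hsub : A.filter (fun a => a + 2 ≤ p) ⊆ Finset.Icc 1 (p - 2) := by
    intro a ha
    simp only [Finset.mem_filter] at ha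
    simp only [Finset.mem_Icc]
    have := hApos a ha.1
    omega
  have := (Finset.card_le_card hsub).trans_eq (Nat.card_Icc 1 (p-2))
  omega

lemma Bof_disj :
    Disjoint ((A.filter (fun a => a + 2 ≤ p)).image (· + 1)) (A.filter (fun a => p + 1 ≤ a)) := by
  rw [Finset.disjoint_left]
  rintro b hb hb'
  simp only [Finset.mem_image, Finset.mem_filter] at hb hb'
  obtain ⟨a, ⟨_, h2⟩, rfl⟩ := hb
  omega

include hp2 hpA hp1 in
lemma sum_Bof : (∑ b ∈ Bof A p, b) + p = (∑ a ∈ A, a) + (A.filter (fun a => a + 2 ≤ p)).card := by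
  have hA : ∑ a ∈ A, a
      = (∑ a ∈ A.filter (fun a => a + 2 ≤ p), a) + ((∑ a ∈ A.filter (fun a => p + 1 ≤ a), a) + p) := by
    rw [← Finset.sum_filter_add_sum_filter_not A (fun a => a + 2 ≤ p), A_split hp2 hpA hp1,
      Finset.sum_insert (by simp)]
    ring
  have hB : ∑ b ∈ Bof A p, b
      = ((∑ a ∈ A.filter (fun a => a + 2 ≤ p), a) + (A.filter (fun a => a + 2 ≤ p)).card)
        + (∑ a ∈ A.filter (fun a => p + 1 ≤ a), a) := by
    rw [Bof, Finset.sum_union Bof_disj, Finset.sum_image (by intro x _ y _ h; simp only at h; omega)]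
    congr 1
    rw [Finset.sum_add_distrib]
    simp
  omega

lemma Bof_two_le (hApos' : ∀ a ∈ A, 0 < a) (hp2' : 2 ≤ p) : ∀ b ∈ Bof A p, 2 ≤ b := by
  intro b hb
  rcases mem_Bof.mp hb with ⟨a, ha, _, rfl⟩ | ⟨_, h2⟩
  · have := hApos' a ha; omega
  · omega

lemma Bof_not_mem_self : p ∉ Bof A p := by
  intro h
  rcases mem_Bof.mp h with ⟨a, _, h2, h3⟩ | ⟨_, h2⟩ <;> omega

lemma Bof_filter_lt :
    (Bof A p).filter (· < p) = (A.filter (fun a => a + 2 ≤ p)).image (· + 1) := by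
  ext b
  simp only [Finset.mem_filter, Finset.mem_image]
  constructor
  · rintro ⟨hb, hlt⟩
    rcases mem_Bof.mp hb with ⟨a, ha, h2, rfl⟩ | ⟨_, h2⟩
    · exact ⟨a, ⟨ha, h2⟩, rfl⟩
    · omega
  · rintro ⟨a, ⟨ha1, ha2⟩, rfl⟩
    refine ⟨mem_Bof.mpr (Or.inl ⟨a, ha1, ha2, rfl⟩), by omega⟩

include hp2 hpA hp1 in
lemma mem_A_iff : ∀ a, a ∈ A ↔
    ((a + 2 ≤ p ∧ a + 1 ∈ Bof A p) ∨ a = p ∨ (p + 1 ≤ a ∧ a ∈ Bof A p)) := by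
  intro a
  constructor
  · intro ha
    by_cases h1 : a + 2 ≤ p
    · exact Or.inl ⟨h1, mem_Bof.mpr (Or.inl ⟨a, ha, h1, rfl⟩)⟩
    · by_cases h2 : a = p
      · exact Or.inr (Or.inl h2)
      · have hane : a ≠ p - 1 := fun h => hp1 (h ▸ ha)
        have : p + 1 ≤ a := by omega
        exact Or.inr (Or.inr ⟨this, mem_Bof.mpr (Or.inr ⟨ha, this⟩)⟩)
  · rintro (⟨h1, h2⟩ | rfl | ⟨h1, h2⟩)
    · rcases mem_Bof.mp h2 with ⟨a', ha', h3, h4⟩ | ⟨_, h3⟩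
      · have : a = a' := by omega
        exact this ▸ ha'
      · omega
    · exact hpA
    · rcases mem_Bof.mp h2 with ⟨a', _, h3, h4⟩ | ⟨h3, _⟩
      · omega
      · exact h3

end BofFacts

lemma pivot_lt_absurd {B : Finset ℕ} {p₁ p₂ : ℕ} (hp₁ : p₁ ∉ B) (hlt : p₁ < p₂)
    (he : p₁ + (B.filter (· < p₂)).card = p₂ + (B.filter (· < p₁)).card) : False := by
  have hsub : B.filter (· < p₂) ⊆ B.filter (· < p₁) ∪ Finset.Ioo p₁ p₂ := by
    intro b hb
    simp only [Finset.mem_filter, Finset.mem_union, Finset.mem_Ioo] at hb ⊢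
    have : b ≠ p₁ := fun h => hp₁ (h ▸ hb.1)
    rcases lt_or_ge b p₁ with h | h
    · exact Or.inl ⟨hb.1, h⟩
    · exact Or.inr ⟨by omega, hb.2⟩
  have := (Finset.card_le_card hsub).trans (Finset.card_union_le _ _)
  rw [Nat.card_Ioo] at this
  omega

lemma exists_pivot (B : Finset ℕ) (hB : ∀ b ∈ B, 2 ≤ b) :
    ∀ t, 1 ≤ t → ∃ p, 1 ≤ p ∧ p ∉ B ∧ p = t + (B.filter (· < p)).card := by
  intro t ht
  induction t with
  | zero => omega
  | succ t ih =>
    by_cases ht1 : 1 ≤ t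
    · obtain ⟨p, hp1, hpB, hpk⟩ := ih ht1
      have hex : ∃ q, p < q ∧ q ∉ B := by
        refine ⟨p + 1 + B.sup id, by omega, fun hc => ?_⟩
        have := Finset.le_sup (f := id) hc
        simp only [id] at this
        omega
      classical
      obtain ⟨hlt, hnB⟩ : p < Nat.find hex ∧ Nat.find hex ∉ B := Nat.find_spec hex
      set p' := Nat.find hex with hp'
      have hmin : ∀ q, p < q → q < p' → q ∈ B := by
        intro q h1 h2
        by_contra hq
        exact absurd (Nat.find_min' hex ⟨h1, hq⟩) (by omega)
      have hfil : B.filter (· < p') = B.filter (· < p) ∪ Finset.Ioo p p' := by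
        ext b
        simp only [Finset.mem_filter, Finset.mem_union, Finset.mem_Ioo]
        constructor
        · rintro ⟨hb, hbp⟩
          rcases lt_trichotomy b p with h | rfl | h
          · exact Or.inl ⟨hb, h⟩
          · exact absurd hb hpB
          · exact Or.inr ⟨h, hbp⟩
        · rintro (⟨hb, h⟩ | ⟨h1, h2⟩)
          · exact ⟨hb, by omega⟩
          · exact ⟨hmin b h1 h2, h2⟩
      have hdisj : Disjoint (B.filter (· < p)) (Finset.Ioo p p') := by
        rw [Finset.disjoint_left]
        intro b hb hb'
        simp only [Finset.mem_filter] at hb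
        simp only [Finset.mem_Ioo] at hb'
        omega
      refine ⟨p', by omega, hnB, ?_⟩
      rw [hfil, Finset.card_union_of_disjoint hdisj, Nat.card_Ioo]
      omega
    · have ht0 : t = 0 := by omega
      subst ht0
      refine ⟨1, le_refl 1, fun h => by have := hB 1 h; omega, ?_⟩
      have hf : B.filter (· < 1) = ∅ :=
        Finset.filter_eq_empty_iff.mpr (fun {b} hb => by have := hB b hb; omega)
      rw [hf]
      simp

lemma toFinset_sum_eq {m : Multiset ℕ} (h : m.Nodup) : ∑ a ∈ m.toFinset, a = m.sum := by
  have h2 := Finset.sum_val (s := m.toFinset)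
  rw [Multiset.toFinset_val, Multiset.dedup_eq_self.mpr h] at h2
  simpa using h2.symm

def Dset (k : ℕ) : Finset (Finset ℕ) :=
  (Finset.Icc 2 (k+2)).powerset.filter (fun T => ∑ i ∈ T, i = k)

lemma b2_count (n : ℕ) :
    ∑ π ∈ Nat.Partition.distincts n, hookCount π.parts 2
      = ∑ k ∈ Finset.range (n-1), (Dset k).card := by
  classical
  simp only [Nat.Partition.distincts]
  rw [Finset.sum_congr rfl (fun (π : Nat.Partition n) hπ => hookCount_two_of_nodup π.parts
        (fun _ hx => π.parts_pos hx)
        ((Finset.mem_filter.mp hπ).2))]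
  rw [← Finset.card_sigma, ← Finset.card_sigma]
  apply Finset.card_bij (fun x _ => (⟨∑ b ∈ Bof x.1.parts.toFinset x.2, b,
    Bof x.1.parts.toFinset x.2⟩ : Σ _ : ℕ, Finset ℕ))
  · -- maps into
    rintro ⟨π, p⟩ hx
    obtain ⟨hπ, hp⟩ := Finset.mem_sigma.mp hx
    have hnd : π.parts.Nodup := (Finset.mem_filter.mp hπ).2
    simp only [Finset.mem_filter, Multiset.mem_toFinset] at hp
    obtain ⟨hpA, hp2, hp1⟩ := hp
    have hpA' : p ∈ π.parts.toFinset := Multiset.mem_toFinset.mpr hpA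
    have hp1' : p - 1 ∉ π.parts.toFinset := fun h => hp1 (Multiset.mem_toFinset.mp h)
    have hApos : ∀ a ∈ π.parts.toFinset, 0 < a :=
      fun a ha => π.parts_pos (Multiset.mem_toFinset.mp ha)
    have hsumA : ∑ a ∈ π.parts.toFinset, a = n := by
      rw [toFinset_sum_eq hnd, π.parts_sum]
    have hsum := sum_Bof hp2 hpA' hp1'
    have hk := lo_card_le hApos hp2
    rw [hsumA] at hsum
    rw [Finset.mem_sigma]
    constructor
    · simp only [Finset.mem_range]
      omega
    · have hsubgoal : Bof π.parts.toFinset p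
          ⊆ Finset.Icc 2 ((∑ b ∈ Bof π.parts.toFinset p, b) + 2) := by
        intro b hb
        have h2b := Bof_two_le hApos hp2 b hb
        have hble : b ≤ ∑ b ∈ Bof π.parts.toFinset p, b :=
          Finset.single_le_sum (f := fun b => b) (fun _ _ => Nat.zero_le _) hb
        exact Finset.mem_Icc.mpr ⟨h2b, by omega⟩
      simp only [Dset, Finset.mem_filter, Finset.mem_powerset]
      first
      | exact ⟨hsubgoal, rfl⟩
      | exact ⟨hsubgoal, trivial⟩
      | exact hsubgoal
  · -- injective
    rintro ⟨π₁, p₁⟩ hx₁ ⟨π₂, p₂⟩ hx₂ heq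
    obtain ⟨hπ₁, hp₁⟩ := Finset.mem_sigma.mp hx₁
    obtain ⟨hπ₂, hp₂⟩ := Finset.mem_sigma.mp hx₂
    have hnd₁ : π₁.parts.Nodup := (Finset.mem_filter.mp hπ₁).2
    have hnd₂ : π₂.parts.Nodup := (Finset.mem_filter.mp hπ₂).2
    simp only [Finset.mem_filter, Multiset.mem_toFinset] at hp₁ hp₂
    set A₁ := π₁.parts.toFinset with hA₁
    set A₂ := π₂.parts.toFinset with hA₂
    have hpA₁ : p₁ ∈ A₁ := Multiset.mem_toFinset.mpr hp₁.1
    have hpA₂ : p₂ ∈ A₂ := Multiset.mem_toFinset.mpr hp₂.1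
    have hp1A₁ : p₁ - 1 ∉ A₁ := fun h => hp₁.2.2 (Multiset.mem_toFinset.mp h)
    have hp1A₂ : p₂ - 1 ∉ A₂ := fun h => hp₂.2.2 (Multiset.mem_toFinset.mp h)
    have hApos₁ : ∀ a ∈ A₁, 0 < a := fun a ha => π₁.parts_pos (Multiset.mem_toFinset.mp ha)
    have hApos₂ : ∀ a ∈ A₂, 0 < a := fun a ha => π₂.parts_pos (Multiset.mem_toFinset.mp ha)
    have hsumA₁ : ∑ a ∈ A₁, a = n := by rw [hA₁, toFinset_sum_eq hnd₁, π₁.parts_sum]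
    have hsumA₂ : ∑ a ∈ A₂, a = n := by rw [hA₂, toFinset_sum_eq hnd₂, π₂.parts_sum]
    have hBeq : Bof A₁ p₁ = Bof A₂ p₂ := congrArg Sigma.snd heq
    set B := Bof A₁ p₁ with hBdef
    have hjeq : (∑ b ∈ B, b) = ∑ b ∈ Bof A₂ p₂, b := by rw [hBeq]
    have hsum₁ := sum_Bof hp₁.2.1 hpA₁ hp1A₁
    have hsum₂ := sum_Bof hp₂.2.1 hpA₂ hp1A₂
    rw [hsumA₁] at hsum₁
    rw [hsumA₂] at hsum₂
    rw [← hBdef] at hsum₁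
    rw [← hBeq] at hsum₂
    have hk₁ : (A₁.filter (fun a => a + 2 ≤ p₁)).card = (B.filter (· < p₁)).card := by
      rw [hBdef, Bof_filter_lt, Finset.card_image_of_injective _ (fun x y h => by omega)]
    have hk₂ : (A₂.filter (fun a => a + 2 ≤ p₂)).card = ((Bof A₂ p₂).filter (· < p₂)).card := by
      rw [Bof_filter_lt, Finset.card_image_of_injective _ (fun x y h => by omega)]
    have hpB₁ : p₁ ∉ B := Bof_not_mem_self
    have hpB₂ : p₂ ∉ B := by rw [hBeq]; exact Bof_not_mem_self
    rw [← hBeq] at hk₂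
    -- p₁ = p₂
    have hpp : p₁ = p₂ := by
      by_contra hne
      rcases Nat.lt_or_ge p₁ p₂ with hlt | hge
      · exact pivot_lt_absurd hpB₁ hlt (by omega)
      · have hlt : p₂ < p₁ := by omega
        exact pivot_lt_absurd hpB₂ hlt (by omega)
    subst hpp
    -- A₁ = A₂
    have hAeq : A₁ = A₂ := by
      ext a
      rw [mem_A_iff hp₁.2.1 hpA₁ hp1A₁ a, mem_A_iff hp₂.2.1 hpA₂ hp1A₂ a, ← hBeq, ← hBdef]
    have hparts : π₁.parts = π₂.parts := by
      have h₁ : π₁.parts = A₁.val := by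
        rw [hA₁, Multiset.toFinset_val, Multiset.dedup_eq_self.mpr hnd₁]
      have h₂ : π₂.parts = A₂.val := by
        rw [hA₂, Multiset.toFinset_val, Multiset.dedup_eq_self.mpr hnd₂]
      rw [h₁, h₂, hAeq]
    have hππ : π₁ = π₂ := Nat.Partition.ext hparts
    subst hππ
    rfl
  · -- surjective
    rintro ⟨j, B⟩ hy
    obtain ⟨hj, hB⟩ := Finset.mem_sigma.mp hy
    simp only [Finset.mem_range] at hj
    simp only [Dset, Finset.mem_filter, Finset.mem_powerset] at hB
    obtain ⟨hBsub, hBsum⟩ := hB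
    have hjn : j + 2 ≤ n := by omega
    have hB2 : ∀ b ∈ B, 2 ≤ b := fun b hb => (Finset.mem_Icc.mp (hBsub hb)).1
    obtain ⟨p, hp1, hpB, hpk⟩ := exists_pivot B hB2 (n - j) (by omega)
    have hp2 : 2 ≤ p := by omega
    set lo := B.filter (· < p) with hlo
    set hi := B.filter (fun b => p < b) with hhi
    set A : Finset ℕ := insert p ((lo.image (· - 1)) ∪ hi) with hAdef
    have hmemA : ∀ a, a ∈ A ↔ (a = p ∨ (∃ b ∈ B, b < p ∧ a = b - 1) ∨ (a ∈ B ∧ p < a)) := by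
      intro a
      simp only [hAdef, Finset.mem_insert, Finset.mem_union, Finset.mem_image, hlo, hhi,
        Finset.mem_filter]
      constructor
      · rintro (rfl | ⟨b, ⟨hb, hbp⟩, rfl⟩ | ⟨h1, h2⟩)
        · exact Or.inl rfl
        · exact Or.inr (Or.inl ⟨b, hb, hbp, rfl⟩)
        · exact Or.inr (Or.inr ⟨h1, h2⟩)
      · rintro (rfl | ⟨b, hb, hbp, rfl⟩ | ⟨h1, h2⟩)
        · exact Or.inl rfl
        · exact Or.inr (Or.inl ⟨b, ⟨hb, hbp⟩, rfl⟩)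
        · exact Or.inr (Or.inr ⟨h1, h2⟩)
    have hposA : ∀ a ∈ A, 0 < a := by
      intro a ha
      rcases (hmemA a).mp ha with rfl | ⟨b, hb, hbp, rfl⟩ | ⟨h1, h2⟩
      · omega
      · have := hB2 b hb; omega
      · omega
    have hp1A : p - 1 ∉ A := by
      intro h
      rcases (hmemA _).mp h with h' | ⟨b, hb, hbp, h'⟩ | ⟨h1, h2⟩
      · omega
      · have := hB2 b hb
        have : b = p := by omega
        subst this
        omega
      · omega
    have hpA : p ∈ A := (hmemA p).mpr (Or.inl rfl)
    -- sum of A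
    have hdisj1 : Disjoint (lo.image (· - 1)) hi := by
      rw [Finset.disjoint_left]
      rintro b hb hb'
      simp only [hlo, hhi, Finset.mem_image, Finset.mem_filter] at hb hb'
      obtain ⟨c, ⟨hc, hcp⟩, rfl⟩ := hb
      have := hB2 c hc
      omega
    have hpnot : p ∉ (lo.image (· - 1)) ∪ hi := by
      intro h
      rcases Finset.mem_union.mp h with h' | h'
      · simp only [hlo, Finset.mem_image, Finset.mem_filter] at h'
        obtain ⟨c, ⟨hc, hcp⟩, h''⟩ := h'
        have := hB2 c hc
        omega
      · simp only [hhi, Finset.mem_filter] at h'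
        omega
    have hinjlo : ∀ x ∈ lo, ∀ y ∈ lo, x - 1 = y - 1 → x = y := by
      intro x hx y hy h
      have hx2 := hB2 x (Finset.mem_filter.mp hx).1
      have hy2 := hB2 y (Finset.mem_filter.mp hy).1
      omega
    have hsumlo : (∑ b ∈ lo.image (· - 1), b) + lo.card = ∑ b ∈ lo, b := by
      rw [Finset.sum_image hinjlo]
      calc (∑ x ∈ lo, (x - 1)) + lo.card = ∑ x ∈ lo, ((x - 1) + 1) := by
            rw [Finset.sum_add_distrib]
            simp
        _ = ∑ x ∈ lo, x := Finset.sum_congr rfl (fun x hx => by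
            have := hB2 x (Finset.mem_filter.mp hx).1
            omega)
    have hsplitB : (∑ b ∈ lo, b) + (∑ b ∈ hi, b) = j := by
      rw [hlo, hhi, ← hBsum]
      rw [← Finset.sum_filter_add_sum_filter_not B (· < p)]
      congr 1
      apply Finset.sum_congr _ (fun x _ => rfl)
      apply Finset.filter_congr
      intro b hb
      have : b ≠ p := fun h => hpB (h ▸ hb)
      simp only [not_lt]
      constructor
      · intro h; omega
      · intro h; omega
    have hsumA : ∑ a ∈ A, a = n := by
      rw [hAdef, Finset.sum_insert hpnot, Finset.sum_union hdisj1]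
      have hklo : lo.card = (B.filter (· < p)).card := by rw [hlo]
      omega
    -- build the partition
    refine ⟨⟨⟨A.val, ?_, ?_⟩, p⟩, ?_, ?_⟩
    · intro i hi'
      exact hposA i hi'
    · have h2 := Finset.sum_val (s := A)
      rw [show Finset.sum A id = ∑ a ∈ A, a from by simp [id], hsumA] at h2
      exact h2
    · rw [Finset.mem_sigma]
      constructor
      · simp only [Nat.Partition.distincts, Finset.mem_filter]
        exact ⟨Finset.mem_univ _, A.nodup⟩
      · simp only [Finset.mem_filter, Multiset.mem_toFinset]
        refine ⟨?_, hp2, ?_⟩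
        · simpa using hpA
        · intro hcon
          exact hp1A (by simpa using hcon)
    · -- value equality
      have htf : (Multiset.toFinset A.val) = A := Finset.val_toFinset A
      have hBof : Bof A p = B := by
        ext b
        rw [mem_Bof]
        constructor
        · rintro (⟨a, ha, h2, rfl⟩ | ⟨h1, h2⟩)
          · rcases (hmemA a).mp ha with rfl | ⟨c, hc, hcp, rfl⟩ | ⟨_, hgt⟩
            · omega
            · have := hB2 c hc
              have : c - 1 + 1 = c := by omega
              rwa [this]
            · omega
          · rcases (hmemA b).mp h1 with rfl | ⟨c, hc, hcp, rfl⟩ | ⟨hmem, _⟩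
            · omega
            · have := hB2 c hc
              omega
            · exact hmem
        · intro hb
          have hbne : b ≠ p := fun h => hpB (h ▸ hb)
          rcases Nat.lt_or_ge b p with hblt | hbge
          · left
            refine ⟨b - 1, (hmemA _).mpr (Or.inr (Or.inl ⟨b, hb, hblt, rfl⟩)), ?_, ?_⟩
            · have := hB2 b hb
              omega
            · have := hB2 b hb
              omega
          · right
            exact ⟨(hmemA b).mpr (Or.inr (Or.inr ⟨hb, by omega⟩)), by omega⟩
      have : Bof (Multiset.toFinset A.val) p = B := by rw [htf, hBof]
      simp only [this, hBsum]

/-- `b₂(n)`: the total number of cells of hook length 2 summed over all partitions of `n`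
into distinct parts. -/
def b2 (n : ℕ) : ℕ :=
  ∑ π ∈ Nat.Partition.distincts n, hookCount π.parts 2

/-- The infinite product `∏_{k=a}^{∞}(1 + q^k)`, defined coefficientwise: the `n`-th
coefficient of the partial product `∏_{k=a}^{a+n}(1 + q^k)` is already stable. -/
noncomputable def prodOnePlusFrom (a : ℕ) : PowerSeries ℚ :=
  PowerSeries.mk fun n =>
    PowerSeries.coeff n
      (∏ k ∈ Finset.Icc a (a + n), (1 + (PowerSeries.X : PowerSeries ℚ) ^ k))

open PowerSeries

lemma coeff_prod_onePlus (s : Finset ℕ) (k : ℕ) :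
    (PowerSeries.coeff k) (∏ i ∈ s, (1 + (X : ℚ⟦X⟧) ^ i))
      = ((s.powerset.filter (fun T => ∑ i ∈ T, i = k)).card : ℚ) := by
  classical
  have h1 : ∏ i ∈ s, (1 + (X : ℚ⟦X⟧) ^ i) = ∑ T ∈ s.powerset, (X : ℚ⟦X⟧) ^ (∑ i ∈ T, i) := by
    rw [show (∏ i ∈ s, (1 + (X : ℚ⟦X⟧) ^ i)) = ∏ i ∈ s, ((X : ℚ⟦X⟧) ^ i + 1) from
      Finset.prod_congr rfl (fun i _ => add_comm _ _)]
    rw [Finset.prod_add]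
    apply Finset.sum_congr rfl
    intro T _
    rw [Finset.prod_const_one, mul_one, Finset.prod_pow_eq_pow_sum]
  rw [h1, map_sum, Finset.card_filter, Nat.cast_sum]
  apply Finset.sum_congr rfl
  intro T _
  rw [PowerSeries.coeff_X_pow]
  by_cases h : (∑ i ∈ T, i) = k <;> simp [h, Ne.symm]

lemma coeff_prodFrom2 (k : ℕ) :
    (PowerSeries.coeff k) (prodOnePlusFrom 2) = ((Dset k).card : ℚ) := by
  rw [prodOnePlusFrom, coeff_mk, show 2 + k = k + 2 from Nat.add_comm 2 k,
    coeff_prod_onePlus]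
  rfl

open PowerSeries in
theorem b2_gen_fun :
    PowerSeries.mk (fun n => (b2 n : ℚ)) =
      (X : ℚ⟦X⟧) ^ 2 * (1 - (X : ℚ⟦X⟧))⁻¹ * prodOnePlusFrom 2 := by
  have hmul : (PowerSeries.mk (fun _ => (1:ℚ))) * (1 - X) = 1 := by
    ext m
    rw [mul_sub, mul_one, map_sub]
    cases m with
    | zero => simp
    | succ m =>
      rw [PowerSeries.coeff_succ_mul_X, coeff_mk, coeff_mk]
      simp [PowerSeries.coeff_one]
  have hGeom : (1 - (X : ℚ⟦X⟧))⁻¹ = PowerSeries.mk (fun _ => (1:ℚ)) := by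
    exact (PowerSeries.inv_eq_iff_mul_eq_one (by simp)).mpr hmul
  ext n
  rw [coeff_mk, hGeom]
  rw [show (X:ℚ⟦X⟧)^2 * PowerSeries.mk (fun _ => (1:ℚ)) * prodOnePlusFrom 2
      = prodOnePlusFrom 2 * ((X:ℚ⟦X⟧)^2 * PowerSeries.mk (fun _ => (1:ℚ))) from by ring]
  have hX2G : ∀ m, (PowerSeries.coeff m) ((X:ℚ⟦X⟧)^2 * PowerSeries.mk (fun _ => (1:ℚ)))
      = if 2 ≤ m then 1 else 0 := by
    intro m
    by_cases h : 2 ≤ m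
    · obtain ⟨d, rfl⟩ : ∃ d, m = d + 2 := ⟨m - 2, by omega⟩
      rw [PowerSeries.coeff_X_pow_mul, coeff_mk, if_pos h]
    · rw [PowerSeries.coeff_mul, if_neg h]
      apply Finset.sum_eq_zero
      rintro ⟨a, b⟩ hab
      replace hab : a + b = m := Finset.HasAntidiagonal.mem_antidiagonal.mp hab
      rw [PowerSeries.coeff_X_pow, if_neg (by omega)]
      ring
  rw [PowerSeries.coeff_mul, Finset.Nat.sum_antidiagonal_eq_sum_range_succ_mk]
  have hterm : ∀ k ∈ Finset.range (n+1),
      (PowerSeries.coeff k) (prodOnePlusFrom 2) *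
        (PowerSeries.coeff (n - k)) ((X:ℚ⟦X⟧)^2 * PowerSeries.mk (fun _ => (1:ℚ)))
      = ((Dset k).card : ℚ) * (if 2 ≤ n - k then 1 else 0) := by
    intro k _
    rw [coeff_prodFrom2, hX2G]
  rw [Finset.sum_congr rfl hterm]
  have hsub : Finset.range (n-1) ⊆ Finset.range (n+1) := Finset.range_subset_range.mpr (by omega)
  rw [← Finset.sum_subset hsub (fun k hk hk' => by
    simp only [Finset.mem_range] at hk hk'
    rw [if_neg (by omega : ¬ 2 ≤ n - k), mul_zero])]
  rw [show b2 n = ∑ k ∈ Finset.range (n-1), (Dset k).card from b2_count n, Nat.cast_sum]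
  apply Finset.sum_congr rfl
  intro k hk
  simp only [Finset.mem_range] at hk
  rw [if_pos (by omega), mul_one]
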